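/- Every solution of the impulsive system x'(t) + π·x(t − 1/2) + c(t)·x([t−1]) = 0 for t ≠ n (n = 1, 2, ...), with impulse condition x(n⁺) − x(n⁻) = −x(n⁺), where c : [0,∞) → [0,∞) is continuous, is oscillatory. -/

import Mathlib

open Filter Topology Set


lemma ex1_aux_not_ev_pos
    (c : ℝ → ℝ) (hcnn : ∀ t, 0 ≤ c t)
    (x : ℝ → ℝ)
    (hsol : ∀ t, 0 < t → (∀ n : ℕ, 0 < n → t ≠ (n : ℝ)) →
      HasDerivAt x (-(Real.pi * x (t - 1 / 2) + c t * x ((⌊t - 1⌋ : ℤ) : ℝ))) t)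
    (hrc : ∀ n : ℕ, 0 < n → ContinuousWithinAt x (Set.Ici (n : ℝ)) (n : ℝ))
    (himp : ∀ n : ℕ, 0 < n → Tendsto x (nhdsWithin (n : ℝ) (Set.Iio (n : ℝ)))
      (nhds (2 * x (n : ℝ)))) :
    ¬ ∃ T, ∀ t, T < t → 0 < x t := by
  rintro ⟨T, hT⟩
  -- choose a natural number n₀ with T + 3 < n₀ and 2 ≤ n₀
  obtain ⟨n₀, hn₀⟩ := exists_nat_gt (max (T + 3) 2)
  have hn₀T : T + 3 < (n₀ : ℝ) := lt_of_le_of_lt (le_max_left _ _) hn₀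
  have hn₀2 : (2 : ℝ) < (n₀ : ℝ) := lt_of_le_of_lt (le_max_right _ _) hn₀
  set w : ℝ → ℝ := fun t => (2 : ℝ) ^ (⌊t⌋ : ℤ) * x t with hw
  have hwpos : ∀ t, T < t → 0 < w t := by
    intro t ht
    have h2 : (0:ℝ) < (2:ℝ) ^ (⌊t⌋ : ℤ) := zpow_pos (by norm_num) _
    exact mul_pos h2 (hT t ht)
  -- floor on [n, n+1)
  have hfl : ∀ (m : ℤ) (s : ℝ), (m:ℝ) ≤ s → s < m + 1 → ⌊s⌋ = m := by
    intro m s h1 h2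
    rw [Int.floor_eq_iff]
    exact ⟨h1, by exact_mod_cast h2⟩
  -- derivative of w at non-integer points
  have hderiv : ∀ t : ℝ, (n₀ : ℝ) - 1 ≤ t → (∀ m : ℤ, t ≠ (m : ℝ)) →
      HasDerivAt w ((2:ℝ) ^ (⌊t⌋ : ℤ) *
        (-(Real.pi * x (t - 1 / 2) + c t * x ((⌊t - 1⌋ : ℤ) : ℝ)))) t := by
    intro t ht htm
    have htpos : 0 < t := by linarith
    have htn : ∀ n : ℕ, 0 < n → t ≠ (n : ℝ) := fun n _ => htm n
    have hx := (hsol t htpos htn).const_mul ((2:ℝ) ^ (⌊t⌋ : ℤ))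
    apply hx.congr_of_eventuallyEq
    have h1 : ((⌊t⌋ : ℤ) : ℝ) < t := lt_of_le_of_ne (Int.floor_le t) (Ne.symm (htm ⌊t⌋))
    have h2 : t < (⌊t⌋ : ℤ) + 1 := Int.lt_floor_add_one t
    filter_upwards [Ioo_mem_nhds h1 h2] with s hs
    simp only [hw]
    rw [hfl ⌊t⌋ s hs.1.le hs.2]
  -- bound on the derivative value
  have hbound : ∀ t : ℝ, (n₀ : ℝ) - 1 ≤ t →
      (2:ℝ) ^ (⌊t⌋ : ℤ) * (-(Real.pi * x (t - 1 / 2) + c t * x ((⌊t - 1⌋ : ℤ) : ℝ)))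
        ≤ -Real.pi * w (t - 1/2) := by
    intro t ht
    have h1 : 0 < x (t - 1/2) := hT _ (by linarith)
    have hf2 : (t:ℝ) - 2 < ((⌊t - 1⌋ : ℤ) : ℝ) := by
      have := Int.sub_one_lt_floor (t - 1)
      linarith
    have h2 : 0 < x ((⌊t - 1⌋ : ℤ) : ℝ) := hT _ (by linarith)
    have h3 : (2:ℝ) ^ (⌊t - 1/2⌋ : ℤ) ≤ (2:ℝ) ^ (⌊t⌋ : ℤ) :=
      zpow_le_zpow_right₀ (by norm_num) (Int.floor_mono (by linarith))
    have h4 : (0:ℝ) < (2:ℝ) ^ (⌊t⌋ : ℤ) := zpow_pos (by norm_num) _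
    have h5 : (0:ℝ) < (2:ℝ) ^ (⌊t - 1/2⌋ : ℤ) := zpow_pos (by norm_num) _
    have hc0 : 0 ≤ c t := hcnn t
    have hpi : 0 < Real.pi := Real.pi_pos
    simp only [hw]
    nlinarith [mul_nonneg (mul_nonneg h4.le hc0) h2.le,
      mul_le_mul_of_nonneg_right h3 h1.le,
      mul_le_mul_of_nonneg_left (mul_le_mul_of_nonneg_right h3 h1.le) hpi.le]
  -- continuity of w on pieces [n, n+1]
  have hrcw : ∀ n : ℕ, 0 < n → ContinuousWithinAt w (Ici (n:ℝ)) (n:ℝ) := by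
    intro n hn
    have hx := (hrc n hn).const_mul ((2:ℝ) ^ (n : ℤ))
    refine ContinuousWithinAt.congr_of_eventuallyEq hx ?_ ?_
    · filter_upwards [Ico_mem_nhdsGE (by linarith : (n:ℝ) < n + 1)] with s hs
      simp only [hw]
      rw [hfl n s (by exact_mod_cast hs.1) (by push_cast; exact_mod_cast hs.2)]
    · simp only [hw]
      rw [hfl n n (by push_cast; exact le_rfl) (by push_cast; linarith)]
  have hlcw : ∀ n : ℕ, 1 < n → Tendsto w (𝓝[<] (n:ℝ)) (𝓝 (w n)) := by
    intro n hn
    have hx := ((himp n (by omega)).const_mul ((2:ℝ) ^ ((n : ℤ) - 1)))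
    have hval : (2:ℝ) ^ ((n:ℤ) - 1) * (2 * x n) = w n := by
      simp only [hw]
      rw [hfl n n (by push_cast; exact le_rfl) (by push_cast; linarith)]
      rw [show ((n:ℤ)) = ((n:ℤ) - 1) + 1 by omega, zpow_add₀ (by norm_num : (2:ℝ) ≠ 0)]
      ring
    rw [hval] at hx
    apply hx.congr'
    have h1 : (n:ℝ) - 1 < (n:ℝ) := by linarith
    filter_upwards [Ico_mem_nhdsLT h1] with s hs
    simp only [hw]
    rw [hfl ((n:ℤ) - 1) s (by push_cast; linarith [hs.1]) (by push_cast; linarith [hs.2])]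
  have hcontpiece : ∀ n : ℕ, n₀ ≤ n → ContinuousOn w (Icc (n:ℝ) ((n:ℝ)+1)) := by
    intro n hn s hs
    have hnpos : (2:ℝ) < (n:ℝ) := lt_of_lt_of_le hn₀2 (by exact_mod_cast hn)
    have hn2 : 2 < n := by exact_mod_cast hnpos
    have hnn : (n₀:ℝ) ≤ (n:ℝ) := by exact_mod_cast hn
    rcases eq_or_lt_of_le hs.1 with heq | hlt
    · rw [← heq]
      exact (hrcw n (by exact_mod_cast (by linarith : (0:ℝ) < (n:ℝ)))).mono Icc_subset_Ici_self
    rcases eq_or_lt_of_le hs.2 with heq | hlt2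
    · -- s = n + 1 : left continuity from the impulse
      subst heq
      have hcast : ((n+1 : ℕ) : ℝ) = (n:ℝ) + 1 := by push_cast; ring_nf
      have hl := hlcw (n+1) (by omega)
      rw [hcast] at hl
      have hl' : ContinuousWithinAt w (Iio ((n:ℝ)+1)) ((n:ℝ)+1) := hl
      refine ContinuousWithinAt.mono ?_ Icc_subset_Iic_self
      rw [← Iio_insert]
      exact hl'.insert
    · -- interior point: differentiable hence continuous
      have hm : ∀ m : ℤ, s ≠ (m : ℝ) := by
        intro m hsm
        subst hsm
        have h1 : (n:ℤ) < m := by exact_mod_cast hlt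
        have h2 : m < (n:ℤ) + 1 := by exact_mod_cast hlt2
        omega
      exact ((hderiv s (by linarith) hm).continuousAt).continuousWithinAt
  -- non-integrality of interior points
  have hmio : ∀ (n : ℕ) (s : ℝ), (n:ℝ) < s → s < (n:ℝ)+1 → ∀ m : ℤ, s ≠ (m:ℝ) := by
    intro n s h1 h2 m hsm
    subst hsm
    have ha : (n:ℤ) < m := by exact_mod_cast h1
    have hb : m < (n:ℤ)+1 := by exact_mod_cast h2
    omega
  -- w is antitone on each piece [n, n+1]
  have hanti : ∀ n : ℕ, n₀ ≤ n → AntitoneOn w (Icc (n:ℝ) ((n:ℝ)+1)) := by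
    intro n hn
    have hnn : (n₀:ℝ) ≤ (n:ℝ) := by exact_mod_cast hn
    have hdiff : ∀ s ∈ interior (Icc (n:ℝ) ((n:ℝ)+1)),
        HasDerivAt w ((2:ℝ) ^ (⌊s⌋ : ℤ) *
          (-(Real.pi * x (s - 1 / 2) + c s * x ((⌊s - 1⌋ : ℤ) : ℝ)))) s := by
      rw [interior_Icc]
      intro s hs
      exact hderiv s (by linarith [hs.1]) (hmio n s hs.1 hs.2)
    apply antitoneOn_of_deriv_nonpos (convex_Icc _ _) (hcontpiece n hn)
    · intro s hs
      exact ((hdiff s hs).differentiableAt).differentiableWithinAt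
    · intro s hs
      rw [(hdiff s hs).deriv]
      rw [interior_Icc] at hs
      have hb := hbound s (by linarith [hs.1])
      have hwp : 0 < w (s - 1/2) := hwpos _ (by linarith [hs.1])
      nlinarith [Real.pi_pos]
  -- the mean value theorem on [n₀+1+1/4, n₀+1+3/4]
  set N : ℝ := ((n₀ : ℕ) : ℝ) with hN
  set t0 : ℝ := N + 1 + 1/4 with ht0
  have hcast1 : ((n₀ + 1 : ℕ) : ℝ) = N + 1 := by push_cast; ring_nf; rw [hN]
  have hcont : ContinuousOn w (Icc t0 (t0 + 1/2)) := by
    intro s hs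
    have h1 : N + 1 < s := by simp only [ht0] at hs; linarith [hs.1]
    have h2 : s < N + 1 + 1 := by simp only [ht0] at hs; linarith [hs.2]
    have hm := hmio (n₀+1) s (by rw [hcast1]; exact h1) (by rw [hcast1]; exact h2)
    exact ((hderiv s (by linarith) hm).continuousAt).continuousWithinAt
  have hder : ∀ s ∈ Ioo t0 (t0 + 1/2),
      HasDerivAt w ((2:ℝ) ^ (⌊s⌋ : ℤ) *
        (-(Real.pi * x (s - 1 / 2) + c s * x ((⌊s - 1⌋ : ℤ) : ℝ)))) s := by
    intro s hs
    have h1 : N + 1 < s := by simp only [ht0] at hs; linarith [hs.1]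
    have h2 : s < N + 1 + 1 := by simp only [ht0] at hs; linarith [hs.2]
    have hm := hmio (n₀+1) s (by rw [hcast1]; exact h1) (by rw [hcast1]; exact h2)
    exact hderiv s (by linarith) hm
  obtain ⟨ξ, hξ, hslope⟩ := exists_hasDerivAt_eq_slope w _ (by linarith : t0 < t0 + 1/2) hcont hder
  -- estimate w (ξ - 1/2) ≥ w t0
  have hξ1 : N + 1 + 1/4 < ξ := by simpa [ht0] using hξ.1
  have hξ2 : ξ < N + 1 + 3/4 := by
    have := hξ.2; simp only [ht0] at this; linarith
  have hanti1 := hanti n₀ le_rfl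
  have hanti2 := hanti (n₀+1) (by omega)
  rw [hcast1] at hanti2
  have hkey : w t0 ≤ w (ξ - 1/2) := by
    rcases le_or_gt (N + 1) (ξ - 1/2) with hcase | hcase
    · exact hanti2 ⟨hcase, by linarith⟩ ⟨by simp only [ht0]; linarith, by simp only [ht0]; linarith⟩ (by linarith)
    · have h1 : w (N+1) ≤ w (ξ - 1/2) :=
        hanti1 ⟨by linarith, by linarith⟩ ⟨by linarith, le_rfl⟩ (by linarith)
      have h2 : w t0 ≤ w (N+1) :=
        hanti2 ⟨le_rfl, by linarith⟩ ⟨by simp only [ht0]; linarith, by simp only [ht0]; linarith⟩ (by simp only [ht0]; linarith)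
      linarith
  -- conclude
  have hbξ := hbound ξ (by linarith)
  have hwt0 : 0 < w t0 := hwpos t0 (by simp only [ht0]; linarith)
  have hwb : 0 < w (t0 + 1/2) := hwpos _ (by simp only [ht0]; linarith)
  have hba : t0 + 1/2 - t0 = 1/2 := by ring
  rw [hba] at hslope
  have hslope' : w (t0 + 1/2) - w t0 = ((2:ℝ) ^ (⌊ξ⌋ : ℤ) *
      (-(Real.pi * x (ξ - 1 / 2) + c ξ * x ((⌊ξ - 1⌋ : ℤ) : ℝ)))) * (1/2) := by
    rw [hslope]; ring
  have hpi3 : (3:ℝ) < Real.pi := Real.pi_gt_three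
  nlinarith [mul_le_mul_of_nonneg_left hkey Real.pi_pos.le]

/-- Example 1: every solution of `x'(t) + π x(t - 1/2) + c(t) x(⌊t-1⌋) = 0` for
`t ≠ n` (`n = 1, 2, ...`), with impulse condition `x(n⁺) - x(n⁻) = -x(n⁺)` (so that
`x(n⁻) = 2 x(n)` with `x(n) = x(n⁺)` by right continuity), where `c ≥ 0` is continuous,
is oscillatory. -/
theorem example_one_oscillatory
    (c : ℝ → ℝ) (hc : Continuous c) (hcnn : ∀ t, 0 ≤ c t)
    (x : ℝ → ℝ)
    (hsol : ∀ t, 0 < t → (∀ n : ℕ, 0 < n → t ≠ (n : ℝ)) →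
      HasDerivAt x (-(Real.pi * x (t - 1 / 2) + c t * x ((⌊t - 1⌋ : ℤ) : ℝ))) t)
    (hrc : ∀ n : ℕ, 0 < n → ContinuousWithinAt x (Set.Ici (n : ℝ)) (n : ℝ))
    (himp : ∀ n : ℕ, 0 < n → Tendsto x (nhdsWithin (n : ℝ) (Set.Iio (n : ℝ)))
      (nhds (2 * x (n : ℝ)))) :
    (¬ ∃ T, ∀ t, T < t → 0 < x t) ∧ (¬ ∃ T, ∀ t, T < t → x t < 0) := by
  constructor
  · exact ex1_aux_not_ev_pos c hcnn x hsol hrc himp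
  · have hsol' : ∀ t, 0 < t → (∀ n : ℕ, 0 < n → t ≠ (n : ℝ)) →
        HasDerivAt (fun s => -(x s))
          (-(Real.pi * (-(x (t - 1 / 2))) + c t * (-(x ((⌊t - 1⌋ : ℤ) : ℝ))))) t := by
      intro t ht htn
      have := (hsol t ht htn).neg
      refine this.congr_deriv ?_
      ring
    have hrc' : ∀ n : ℕ, 0 < n →
        ContinuousWithinAt (fun s => -(x s)) (Set.Ici (n : ℝ)) (n : ℝ) :=
      fun n hn => (hrc n hn).neg
    have himp' : ∀ n : ℕ, 0 < n → Tendsto (fun s => -(x s))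
        (nhdsWithin (n : ℝ) (Set.Iio (n : ℝ))) (nhds (2 * (-(x (n : ℝ))))) := by
      intro n hn
      have := (himp n hn).neg
      rwa [show -(2 * x (n:ℝ)) = 2 * (-(x (n:ℝ))) by ring] at this
    have := ex1_aux_not_ev_pos c hcnn (fun s => -(x s)) hsol' hrc' himp'
    intro ⟨T, hT⟩
    exact this ⟨T, fun t ht => by simpa using hT t ht⟩
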